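/- The elements βᵢ = P(eᵢ) + (g_{ij}eʲ)P, built from an orthonormal-indexed basis, satisfy the standard DKP relation βᵢβⱼβₖ + βₖβⱼβᵢ = g_{ij}βₖ + g_{kj}βᵢ, where g_{ij} = g(eᵢ,eⱼ). -/

import Mathlib

noncomputable section

open CliffordAlgebra

variable (F : Type*) [Field F] (V : Type*) [AddCommGroup V] [Module F V]

/-- The quadratic form `Q[v ⊕ α] = α v` on `W = V ⊕ V*`. -/
def Qf : QuadraticForm F (V × Module.Dual F V) where
  toFun w := w.2 w.1
  toFun_smul a w := by simp [smul_eq_mul, mul_assoc]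
  exists_companion' :=
    ⟨LinearMap.mk₂ F (fun w w' => w.2 w'.1 + w'.2 w.1)
      (fun m m' n => by simp; ring) (fun c m n => by simp; ring)
      (fun m n n' => by simp; ring) (fun c m n => by simp; ring),
     fun w w' => by simp; ring⟩

/-- Image of a vector `v ∈ V` in the Clifford algebra. -/
def ιv (v : V) : CliffordAlgebra (Qf F V) := ι (Qf F V) (v, 0)

/-- Image of a covector `α ∈ V*` in the Clifford algebra. -/
def ιd (α : Module.Dual F V) : CliffordAlgebra (Qf F V) := ι (Qf F V) ((0 : V), α)


lemma key_dkp (v : V) (α : Module.Dual F V) (x : CliffordAlgebra (Qf F V)) :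
    ιv F V v * (ιd F V α * x) = α v • x - ιd F V α * (ιv F V v * x) := by
  have h := CliffordAlgebra.ι_mul_ι_add_swap (Q := Qf F V) (v, 0) ((0 : V), α)
  have hp : QuadraticMap.polar (Qf F V) (v, 0) ((0 : V), α) = α v := by
    have hQ : ∀ w : V × Module.Dual F V, Qf F V w = w.2 w.1 := fun w => rfl
    simp [QuadraticMap.polar, hQ]
  rw [hp] at h
  have hthis : ιv F V v * ιd F V α = algebraMap F _ (α v) - ιd F V α * ιv F V v := by
    rw [ιv, ιd]; exact eq_sub_of_add_eq h
  calc ιv F V v * (ιd F V α * x) = (ιv F V v * ιd F V α) * x := by rw [mul_assoc]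
    _ = α v • x - ιd F V α * (ιv F V v * x) := by
        rw [hthis, sub_mul, Algebra.smul_def, mul_assoc]

variable {n : ℕ} (bV : Module.Basis (Fin n) F V)

/-- The fundamental idempotent `P = N̄₁⋯N̄ₙ` with `N̄ⱼ = (eⱼ)(eʲ)`. -/
def Pel : CliffordAlgebra (Qf F V) :=
  (List.ofFn fun j : Fin n => ιv F V (bV j) * ιd F V (bV.coord j)).prod

/-- the elements `βᵢ = P(eᵢ) + (g_{ij}eʲ)P` satisfy the standard
DKP relation `βᵢβⱼβₖ + βₖβⱼβᵢ = g_{ij}βₖ + g_{kj}βᵢ`. -/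
theorem stmt14 (g : LinearMap.BilinForm F V)
    (hgsymm : ∀ v w : V, g v w = g w v)
    (P : CliffordAlgebra (Qf F V))
    (hP2 : P * P = P)
    (hPd : ∀ ρ : Module.Dual F V, P * ιd F V ρ = 0)
    (hvP : ∀ v : V, ιv F V v * P = 0)
    (i j k : Fin n) :
    letI beta : Fin n → CliffordAlgebra (Qf F V) :=
      fun i => P * ιv F V (bV i) + ιd F V (∑ l, g (bV i) (bV l) • bV.coord l) * P
    beta i * beta j * beta k + beta k * beta j * beta i =
      g (bV i) (bV j) • beta k + g (bV k) (bV j) • beta i := by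
  set beta : Fin n → CliffordAlgebra (Qf F V) :=
    fun i => P * ιv F V (bV i) + ιd F V (∑ l, g (bV i) (bV l) • bV.coord l) * P with hbdef
  have hα : ∀ a b : Fin n, (∑ l, g (bV a) (bV l) • bV.coord l) (bV b) = g (bV a) (bV b) := by
    intro a b
    simp [Module.Basis.coord_apply, Module.Basis.repr_self, Finsupp.single_apply, smul_eq_mul]
  set d : Fin n → CliffordAlgebra (Qf F V) :=
    fun a => ιd F V (∑ l, g (bV a) (bV l) • bV.coord l) with hd
  set v : Fin n → CliffordAlgebra (Qf F V) := fun a => ιv F V (bV a) with hv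
  have hbeta : ∀ a, beta a = P * v a + d a * P := fun a => rfl
  have hA : ∀ (a : Fin n) (x : CliffordAlgebra (Qf F V)), v a * (P * x) = 0 := by
    intro a x; rw [← mul_assoc, hv]; simp [hvP]
  have hB : ∀ (a : Fin n) (x : CliffordAlgebra (Qf F V)), P * (d a * x) = 0 := by
    intro a x; rw [← mul_assoc, hd]; simp [hPd]
  have hP2' : ∀ x : CliffordAlgebra (Qf F V), P * (P * x) = P * x := by
    intro x; rw [← mul_assoc, hP2]
  have hA0 : ∀ a : Fin n, v a * P = 0 := fun a => hvP _
  have hkey : ∀ (a b : Fin n) (x : CliffordAlgebra (Qf F V)),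
      v a * (d b * x) = g (bV b) (bV a) • x - d b * (v a * x) := by
    intro a b x
    rw [hv, hd, key_dkp, hα]
  have hmul : ∀ a b : Fin n, beta a * beta b = g (bV a) (bV b) • P + d a * (P * v b) := by
    intro a b
    rw [hbeta, hbeta]
    simp only [add_mul, mul_add, mul_assoc, hA, hA0, hB, hkey, hP2', mul_zero, zero_add,
      add_zero, mul_sub, mul_smul_comm, sub_zero, hP2]
    rw [hgsymm (bV b) (bV a), add_comm]
  have htriple : ∀ a b c : Fin n, beta a * beta b * beta c =
      g (bV a) (bV b) • (P * v c) + g (bV c) (bV b) • (d a * P) := by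
    intro a b c
    rw [hmul, hbeta]
    simp only [add_mul, mul_add, smul_mul_assoc, mul_assoc, hA, hA0, hB, hkey, hP2',
      mul_zero, smul_zero, zero_add, add_zero, mul_sub, mul_smul_comm, sub_zero, hP2]
  rw [htriple, htriple, hbeta k, hbeta i, smul_add, smul_add]
  abel
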